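/- For the non-symmetric metric g_{ij} on ℝ⁴ given by the matrix with rows (s₀, n₀, n₁, n₂), (−n₀, s₁, n₃, n₄), (−n₁, −n₃, s₂, n₅), (−n₂, −n₄, −n₅, s₃), with g := s₀s₁s₂s₃, the torsion components T^i_{jk} = Γ^i_{jk} − Γ^i_{kj} satisfy the double contraction identity g^{\underline{γδ}} T^ζ_{γε} T^ε_{δζ} = −6 g⁻¹ ( (n₃′(t))² s₃(t) + (n₄′(t))² s₂(t) + (n₅′(t))² s₁(t) ); consequently the scalar curvature with torsion ⁰R̃ := R + ¼ g^{\underline{γδ}} T^β_{γα} T^α_{δβ} equals R − (3/2) g⁻¹ ( s₃(t)(n₃′(t))² + s₂(t)(n₄′(t))² + s₁(t)(n₅′(t))² ), where R is the scalar curvature of the symmetric part of the metric. -/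
import Mathlib


noncomputable section

/-- All metric components depend only on the time coordinate `t`, so the partial
derivative in direction `k` is `d/dt` for `k = 0` and `0` otherwise. -/
def pdT (k : Fin 4) (f : ℝ → ℝ) (t : ℝ) : ℝ := if k = 0 then deriv f t else 0

/-- Generalized Christoffel symbols of the first kind
`Γ_{i.jk} = ½(∂_k g_{ji} − ∂_i g_{jk} + ∂_j g_{ik})`. -/
def chr1 (g : Fin 4 → Fin 4 → ℝ → ℝ) (i j k : Fin 4) (t : ℝ) : ℝ :=
  (1 / 2) * (pdT k (g j i) t - pdT i (g j k) t + pdT j (g i k) t)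

/-- Generalized Christoffel symbols of the second kind for a diagonal symmetric part:
`Γ^i_{jk} = (s_i)⁻¹ Γ_{i.jk}` (no sum over `i`). -/
def chr2 (sd : Fin 4 → ℝ → ℝ) (g : Fin 4 → Fin 4 → ℝ → ℝ) (i j k : Fin 4) (t : ℝ) : ℝ :=
  (sd i t)⁻¹ * chr1 g i j k t

/-- Torsion `T^i_{jk} = Γ^i_{jk} − Γ^i_{kj}`. -/
def tors (sd : Fin 4 → ℝ → ℝ) (g : Fin 4 → Fin 4 → ℝ → ℝ) (i j k : Fin 4) (t : ℝ) : ℝ :=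
  chr2 sd g i j k t - chr2 sd g i k j t

/-- The non-symmetric metric with rows `(s₀, n₀, n₁, n₂)`, `(−n₀, s₁, n₃, n₄)`,
`(−n₁, −n₃, s₂, n₅)`, `(−n₂, −n₄, −n₅, s₃)`. -/
def metG (s₀ s₁ s₂ s₃ n₀ n₁ n₂ n₃ n₄ n₅ : ℝ → ℝ) : Fin 4 → Fin 4 → ℝ → ℝ :=
  ![![s₀, n₀, n₁, n₂],
    ![-n₀, s₁, n₃, n₄],
    ![-n₁, -n₃, s₂, n₅],
    ![-n₂, -n₄, -n₅, s₃]]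

/-- Diagonal of the symmetric part of the metric. -/
def sdiag (s₀ s₁ s₂ s₃ : ℝ → ℝ) : Fin 4 → ℝ → ℝ := ![s₀, s₁, s₂, s₃]

end


noncomputable def amat (n₀ n₁ n₂ n₃ n₄ n₅ : ℝ → ℝ) (t : ℝ) : Fin 4 → Fin 4 → ℝ :=
  ![![0, deriv n₀ t, deriv n₁ t, deriv n₂ t],
    ![-deriv n₀ t, 0, deriv n₃ t, deriv n₄ t],
    ![-deriv n₁ t, -deriv n₃ t, 0, deriv n₅ t],
    ![-deriv n₂ t, -deriv n₄ t, -deriv n₅ t, 0]]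

set_option maxHeartbeats 2000000 in
theorem tors_val (s₀ s₁ s₂ s₃ n₀ n₁ n₂ n₃ n₄ n₅ : ℝ → ℝ) (t : ℝ) (i j k : Fin 4) :
    tors (sdiag s₀ s₁ s₂ s₃) (metG s₀ s₁ s₂ s₃ n₀ n₁ n₂ n₃ n₄ n₅) i j k t =
      (sdiag s₀ s₁ s₂ s₃ i t)⁻¹ *
        ((if k = 0 then -(amat n₀ n₁ n₂ n₃ n₄ n₅ t i j) else 0) +
         (if j = 0 then amat n₀ n₁ n₂ n₃ n₄ n₅ t i k else 0) -
         (if i = 0 then amat n₀ n₁ n₂ n₃ n₄ n₅ t j k else 0)) := by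
  have hneg : ∀ f : ℝ → ℝ, deriv (-f) t = -deriv f t := fun f => deriv.neg
  fin_cases i <;> fin_cases j <;> fin_cases k <;>
    simp [tors, chr2, chr1, pdT, metG, sdiag, amat, hneg] <;> ring

set_option maxHeartbeats 8000000 in
/-- the double contraction of the torsion with the inverse symmetric part of
the metric, and the resulting scalar curvature with torsion. -/
theorem stmt_5 (s₀ s₁ s₂ s₃ n₀ n₁ n₂ n₃ n₄ n₅ : ℝ → ℝ)
    (hd : ∀ f ∈ [s₀, s₁, s₂, s₃, n₀, n₁, n₂, n₃, n₄, n₅], Differentiable ℝ f)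
    (t : ℝ) (h0 : s₀ t ≠ 0) (h1 : s₁ t ≠ 0) (h2 : s₂ t ≠ 0) (h3 : s₃ t ≠ 0) :
    let g := metG s₀ s₁ s₂ s₃ n₀ n₁ n₂ n₃ n₄ n₅
    let sd := sdiag s₀ s₁ s₂ s₃
    let T := tors sd g
    let ginv : Fin 4 → Fin 4 → ℝ := fun i j => if i = j then (sd i t)⁻¹ else 0
    let gdet := s₀ t * s₁ t * s₂ t * s₃ t
    let Sg := (deriv n₃ t) ^ 2 * s₃ t + (deriv n₄ t) ^ 2 * s₂ t + (deriv n₅ t) ^ 2 * s₁ t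
    let contr := ∑ γ, ∑ δ, ∑ ε, ∑ ζ, ginv γ δ * T ζ γ ε t * T ε δ ζ t
    contr = -6 * gdet⁻¹ * Sg ∧
    (∀ R : ℝ, R + (1 / 4) * contr = R - (3 / 2) * gdet⁻¹ * Sg) := by
  intro g sd T ginv gdet Sg contr
  have key : contr = -6 * gdet⁻¹ * Sg := by
    simp only [contr, T, ginv, gdet, Sg, g, sd, Fin.sum_univ_four, tors_val]
    simp only [amat, sdiag, Matrix.cons_val_zero, Matrix.cons_val_one, Matrix.head_cons,
      Matrix.cons_val_two, Matrix.tail_cons, Matrix.cons_val_three, Matrix.head_fin_const,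
      Fin.isValue, Fin.reduceEq, reduceIte]
    norm_num
    field_simp
    ring
  exact ⟨key, fun R => by rw [key]; ring⟩
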